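/- Let {Y_{ij} : 1 ≤ i ≤ k, 1 ≤ j ≤ m} be real-valued random variables with k ≥ 2, m ≥ 1. Then P(⋃_{i=2}^k { max_{1≤j≤m} Y_{1j} > max_{1≤j≤m} Y_{ij} }) ≤ Σ_{i=2}^k P(Y_{11} > Y_{i1}) + Σ_{j=2}^m P(Y_{11} < Y_{1j}). (Additive upper bound on the probability of incorrect selection in robust ranking and selection.) -/
import Mathlib


open MeasureTheory

theorem stmt_2 {Ω : Type*} [MeasurableSpace Ω] (P : Measure Ω) [IsProbabilityMeasure P]
    (k m : ℕ) (hk : 2 ≤ k) (hm : 1 ≤ m) (Y : Fin k → Fin m → Ω → ℝ) :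
    let i1 : Fin k := ⟨0, by omega⟩
    let j1 : Fin m := ⟨0, hm⟩
    let Mx : Fin k → Ω → ℝ := fun i ω =>
      Finset.univ.sup' (Finset.univ_nonempty_iff.mpr ⟨j1⟩) fun j => Y i j ω
    P {ω | ∃ i, i ≠ i1 ∧ Mx i1 ω > Mx i ω} ≤
      ∑ i ∈ Finset.univ.erase i1, P {ω | Y i1 j1 ω > Y i j1 ω} +
      ∑ j ∈ Finset.univ.erase j1, P {ω | Y i1 j1 ω < Y i1 j ω} := by
  intro i1 j1 Mx
  have hsub : {ω | ∃ i, i ≠ i1 ∧ Mx i1 ω > Mx i ω} ⊆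
      (⋃ i ∈ Finset.univ.erase i1, {ω | Y i1 j1 ω > Y i j1 ω}) ∪
      (⋃ j ∈ Finset.univ.erase j1, {ω | Y i1 j1 ω < Y i1 j ω}) := by
    rintro ω ⟨i, hi, hgt⟩
    by_cases hA : Y i1 j1 ω > Y i j1 ω
    · left
      exact Set.mem_biUnion (Finset.mem_erase.mpr ⟨hi, Finset.mem_univ i⟩) hA
    · right
      push_neg at hA
      have h1 : Y i j1 ω ≤ Mx i ω := by exact Finset.le_sup' (fun j => Y i j ω) (Finset.mem_univ j1)
      obtain ⟨j, _, hj⟩ := Finset.exists_mem_eq_sup' (Finset.univ_nonempty_iff.mpr ⟨j1⟩)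
        (fun j => Y i1 j ω)
      have hlt : Y i1 j1 ω < Y i1 j ω := by
        have : Mx i1 ω = Y i1 j ω := hj
        calc Y i1 j1 ω ≤ Y i j1 ω := hA
          _ ≤ Mx i ω := h1
          _ < Mx i1 ω := hgt
          _ = Y i1 j ω := this
      have hjne : j ≠ j1 := fun h => absurd hlt (by rw [h]; exact lt_irrefl _)
      exact Set.mem_biUnion (Finset.mem_erase.mpr ⟨hjne, Finset.mem_univ j⟩) hlt
  calc P {ω | ∃ i, i ≠ i1 ∧ Mx i1 ω > Mx i ω} ≤ _ := measure_mono hsub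
    _ ≤ P (⋃ i ∈ Finset.univ.erase i1, {ω | Y i1 j1 ω > Y i j1 ω}) +
        P (⋃ j ∈ Finset.univ.erase j1, {ω | Y i1 j1 ω < Y i1 j ω}) := measure_union_le _ _
    _ ≤ _ := add_le_add (measure_biUnion_finset_le _ _) (measure_biUnion_finset_le _ _)
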